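/- arXiv:1212.0506 — 2 statements merged into one kernel-verified Lean document; each statement's English description precedes it below -/
import Mathlib

section
/- Let u ∈ ℤ[ω]^n be a vector with ‖u‖² = Σ_j |u_j|² = 1. Then there exists exactly one index j with u_j ≠ 0, and for this index u_j = ω^m for some m ∈ {0, 1, ..., 7}; all other entries of u are 0. -/
noncomputable section

/-- The eighth root of unity `ω = e^{iπ/4} = (1+i)/√2`. -/
def ω : ℂ := (1 + Complex.I) / Real.sqrt 2

/-- A rational number is dyadic if it has the form `a / 2^n` with `a ∈ ℤ`, `n ∈ ℕ`. -/
def IsDyadic (q : ℚ) : Prop := ∃ (a : ℤ) (n : ℕ), q = a / 2 ^ n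

/-- Membership in the ring `𝔻[ω] = ℤ[1/√2, i]`: complex numbers of the form
`aω³ + bω² + cω + d` with `a, b, c, d` dyadic rationals. -/
def inDω (t : ℂ) : Prop :=
  ∃ a b c d : ℚ, IsDyadic a ∧ IsDyadic b ∧ IsDyadic c ∧ IsDyadic d ∧
    t = (a : ℂ) * ω ^ 3 + (b : ℂ) * ω ^ 2 + (c : ℂ) * ω + (d : ℂ)

/-- Membership in the ring `ℤ[ω]`: complex numbers of the form
`aω³ + bω² + cω + d` with `a, b, c, d ∈ ℤ`. -/
def inZω (t : ℂ) : Prop :=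
  ∃ a b c d : ℤ, t = (a : ℂ) * ω ^ 3 + (b : ℂ) * ω ^ 2 + (c : ℂ) * ω + (d : ℂ)

lemma hs2c : ((Real.sqrt 2 : ℝ) : ℂ)^2 = 2 := by
  norm_cast
  rw [Real.sq_sqrt]; norm_num

lemma hsne : ((Real.sqrt 2 : ℝ) : ℂ) ≠ 0 := by
  simp only [ne_eq, Complex.ofReal_eq_zero]
  positivity

lemma hω2 : ω^2 = Complex.I := by
  rw [ω]
  rw [div_pow]
  rw [hs2c]
  ring_nf
  rw [Complex.I_sq]
  ring

lemma hω4 : ω^4 = -1 := by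
  rw [show (4:ℕ) = 2*2 from rfl, pow_mul, hω2, Complex.I_sq]

lemma hω3 : ω^3 = (Complex.I - 1) / Real.sqrt 2 := by
  rw [show (3:ℕ) = 2+1 from rfl, pow_add, hω2, pow_one, ω]
  field_simp
  linear_combination Complex.I_sq

lemma normSq_Zω (a b c d : ℤ) :
    Complex.normSq ((a:ℂ)*ω^3 + b*ω^2 + c*ω + d)
      = ((a^2+b^2+c^2+d^2 : ℤ) : ℝ) + Real.sqrt 2 * ((d*(c-a)+b*(a+c) : ℤ) : ℝ) := by
  have hs : Real.sqrt 2 ^ 2 = 2 := Real.sq_sqrt (by norm_num)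
  have hspos : (0:ℝ) < Real.sqrt 2 := Real.sqrt_pos.mpr (by norm_num)
  have h : ((a:ℂ)*ω^3 + b*ω^2 + c*ω + d)
      = ((((c:ℝ)-a)/Real.sqrt 2 + d : ℝ) : ℂ) + ((((a:ℝ)+c)/Real.sqrt 2 + b : ℝ) : ℂ) * Complex.I := by
    rw [hω3, hω2, ω]
    push_cast
    field_simp
    ring
  rw [h, Complex.normSq_add_mul_I]
  push_cast
  field_simp
  ring_nf
  have hs3 : Real.sqrt 2 ^ 3 = 2 * Real.sqrt 2 := by rw [pow_succ, hs]
  rw [hs3, hs]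
  ring

lemma omega_ne_zero : ω ≠ 0 := by
  intro h
  have := hω4
  rw [h] at this
  norm_num at this

set_option maxHeartbeats 2000000 in
lemma unit_case (a b c d : ℤ) (h : a^2+b^2+c^2+d^2 = 1) :
    ∃ m : ℕ, m ≤ 7 ∧ (a:ℂ)*ω^3 + b*ω^2 + c*ω + d = ω^m := by
  have ha1 : -1 ≤ a ∧ a ≤ 1 := by constructor <;> nlinarith [sq_nonneg b, sq_nonneg c, sq_nonneg d]
  have hb1 : -1 ≤ b ∧ b ≤ 1 := by constructor <;> nlinarith [sq_nonneg a, sq_nonneg c, sq_nonneg d]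
  have hc1 : -1 ≤ c ∧ c ≤ 1 := by constructor <;> nlinarith [sq_nonneg a, sq_nonneg b, sq_nonneg d]
  have hd1 : -1 ≤ d ∧ d ≤ 1 := by constructor <;> nlinarith [sq_nonneg a, sq_nonneg b, sq_nonneg c]
  obtain ⟨ha1, ha2⟩ := ha1; obtain ⟨hb1, hb2⟩ := hb1
  obtain ⟨hc1, hc2⟩ := hc1; obtain ⟨hd1, hd2⟩ := hd1
  interval_cases a <;> interval_cases b <;> interval_cases c <;> interval_cases d <;>
    first
    | (exfalso; revert h; decide)
    | (refine ⟨0, by norm_num, ?_⟩; push_cast; ring1)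
    | (refine ⟨1, by norm_num, ?_⟩; push_cast; ring1)
    | (refine ⟨2, by norm_num, ?_⟩; push_cast; ring1)
    | (refine ⟨3, by norm_num, ?_⟩; push_cast; ring1)
    | (refine ⟨4, by norm_num, ?_⟩; push_cast; linear_combination -hω4)
    | (refine ⟨5, by norm_num, ?_⟩; push_cast; linear_combination -ω * hω4)
    | (refine ⟨6, by norm_num, ?_⟩; push_cast; linear_combination -ω^2 * hω4)
    | (refine ⟨7, by norm_num, ?_⟩; push_cast; linear_combination -ω^3 * hω4)

/-- If `u ∈ ℤ[ω]^n` has `‖u‖² = 1`, then there is exactly one index `j` with `u_j ≠ 0`;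
for this index `u_j = ω^m` for some `m ∈ {0, …, 7}`, and all other entries are `0`. -/
theorem stmt16 (n : ℕ) (u : Fin n → ℂ) (hu : ∀ j, inZω (u j))
    (hnorm : ∑ j, Complex.normSq (u j) = 1) :
    (∃! j, u j ≠ 0) ∧
    ∃ j, (∃ m : ℕ, m ≤ 7 ∧ u j = ω ^ m) ∧ ∀ l, l ≠ j → u l = 0 := by
  choose a b c d hu' using hu
  set N : Fin n → ℤ := fun j => a j ^ 2 + b j ^ 2 + c j ^ 2 + d j ^ 2 with hN
  set M : Fin n → ℤ := fun j => d j * (c j - a j) + b j * (a j + c j) with hM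
  have key : ∀ j, Complex.normSq (u j) = ((N j : ℤ) : ℝ) + Real.sqrt 2 * ((M j : ℤ) : ℝ) := by
    intro j; rw [hu' j]; exact normSq_Zω _ _ _ _
  have hsum : ((∑ j, N j : ℤ) : ℝ) + Real.sqrt 2 * ((∑ j, M j : ℤ) : ℝ) = 1 := by
    have hnorm' : ∑ j, (((N j : ℤ) : ℝ) + Real.sqrt 2 * ((M j : ℤ) : ℝ)) = 1 := by
      rw [← hnorm]
      exact Finset.sum_congr rfl fun j _ => (key j).symm
    rw [Finset.sum_add_distrib, ← Finset.mul_sum] at hnorm'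
    push_cast
    linarith
  have hMz : (∑ j, M j) = 0 := by
    by_contra hB
    have hB' : ((∑ j, M j : ℤ) : ℝ) ≠ 0 := Int.cast_ne_zero.mpr hB
    apply irrational_sqrt_two
    refine ⟨((1 - (∑ j, N j) : ℤ) : ℚ) / ((∑ j, M j : ℤ) : ℚ), ?_⟩
    have hcast : ((((1 - (∑ j, N j) : ℤ) : ℚ) / ((∑ j, M j : ℤ) : ℚ) : ℚ) : ℝ)
        = (((1 - (∑ j, N j) : ℤ) : ℝ)) / (((∑ j, M j : ℤ) : ℝ)) := by
      push_cast; ring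
    rw [hcast, div_eq_iff hB']
    push_cast
    push_cast at hsum
    linarith
  have hNs : (∑ j, N j) = 1 := by
    rw [hMz] at hsum
    norm_num at hsum
    exact_mod_cast hsum
  have hNnonneg : ∀ j, 0 ≤ N j := fun j => by simp only [hN]; positivity
  have hzero : ∀ j, N j = 0 → u j = 0 := by
    intro j hj
    have h0 : a j = 0 ∧ b j = 0 ∧ c j = 0 ∧ d j = 0 := by
      simp only [hN] at hj
      refine ⟨?_, ?_, ?_, ?_⟩ <;>
        nlinarith [sq_nonneg (a j), sq_nonneg (b j), sq_nonneg (c j), sq_nonneg (d j)]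
    rw [hu' j, h0.1, h0.2.1, h0.2.2.1, h0.2.2.2]
    simp
  have hex : ∃ j, N j ≠ 0 := by
    by_contra h
    push_neg at h
    rw [Finset.sum_congr rfl (fun j _ => h j)] at hNs
    simp at hNs
  obtain ⟨j, hj⟩ := hex
  have hsplit : N j + ∑ l ∈ Finset.univ.erase j, N l = ∑ l, N l :=
    Finset.add_sum_erase Finset.univ N (Finset.mem_univ j)
  have herasenn : 0 ≤ ∑ l ∈ Finset.univ.erase j, N l :=
    Finset.sum_nonneg fun l _ => hNnonneg l
  have hNjnn : 0 ≤ N j := hNnonneg j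
  have hNj1 : N j = 1 := by omega
  have herase0 : ∑ l ∈ Finset.univ.erase j, N l = 0 := by omega
  have hothers : ∀ l, l ≠ j → u l = 0 := by
    intro l hl
    apply hzero
    exact (Finset.sum_eq_zero_iff_of_nonneg (fun l _ => hNnonneg l)).mp herase0 l
      (Finset.mem_erase.mpr ⟨hl, Finset.mem_univ l⟩)
  obtain ⟨m, hm7, hm⟩ := unit_case (a j) (b j) (c j) (d j) hNj1
  have huj : u j = ω ^ m := by rw [hu' j]; exact hm
  have hujne : u j ≠ 0 := by rw [huj]; exact pow_ne_zero m omega_ne_zero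
  refine ⟨⟨j, hujne, fun l hl => ?_⟩, j, ⟨m, hm7, huj⟩, hothers⟩
  by_contra hlj
  exact hl (hothers l hlj)
end
end

section
/- For all n ≥ 1 and k ∈ ℕ, the set of unitary 2^n × 2^n complex matrices U such that √2^k·U has all entries in ℤ[ω] (i.e., with denominator exponent k) is finite, of cardinality at most 2^(4^n·(4+2k)). -/
noncomputable section

lemma sqrt2_pos : (0:ℝ) < Real.sqrt 2 := Real.sqrt_pos.2 (by norm_num)

lemma sqrt2_sq : Real.sqrt 2 ^ 2 = 2 := Real.sq_sqrt (by norm_num)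

lemma omega_sq : ω ^ 2 = Complex.I := by
  have h2C : ((Real.sqrt 2 : ℝ) : ℂ) ^ 2 = 2 := by
    exact_mod_cast sqrt2_sq
  have h1 : (1 + Complex.I)^2 = 2 * Complex.I := by
    rw [add_sq, Complex.I_sq]; ring
  have hσC : ((Real.sqrt 2 : ℝ) : ℂ) ≠ 0 := by
    exact_mod_cast ne_of_gt sqrt2_pos
  rw [ω, div_pow, h1, h2C]
  field_simp

lemma normSq_zomega (a b c d : ℤ) :
    Complex.normSq ((a:ℂ) * ω ^ 3 + (b:ℂ) * ω ^ 2 + (c:ℂ) * ω + (d:ℂ)) =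
      ((a^2 + b^2 + c^2 + d^2 : ℤ) : ℝ)
        + ((d*(c-a) + b*(c+a) : ℤ) : ℝ) * Real.sqrt 2 := by
  have hσ : (Real.sqrt 2 : ℝ) ≠ 0 := ne_of_gt sqrt2_pos
  have h2 : (Real.sqrt 2 : ℝ) ^ 2 = 2 := sqrt2_sq
  have h3 : ω ^ 3 = Complex.I * ω := by
    rw [pow_succ, omega_sq]
  have hre : ((a:ℂ) * ω ^ 3 + (b:ℂ) * ω ^ 2 + (c:ℂ) * ω + (d:ℂ)).re =
      ((c:ℝ) - a) / Real.sqrt 2 + d := by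
    rw [h3, omega_sq, ω]
    simp [Complex.add_re, Complex.mul_re, Complex.div_ofReal_re, Complex.div_ofReal_im]
    ring
  have him : ((a:ℂ) * ω ^ 3 + (b:ℂ) * ω ^ 2 + (c:ℂ) * ω + (d:ℂ)).im =
      ((a:ℝ) + c) / Real.sqrt 2 + b := by
    rw [h3, omega_sq, ω]
    simp [Complex.add_im, Complex.mul_im, Complex.div_ofReal_re, Complex.div_ofReal_im]
    ring
  rw [Complex.normSq_apply, hre, him]
  field_simp
  push_cast
  ring_nf
  have h3' : Real.sqrt 2 ^ 3 = 2 * Real.sqrt 2 := by rw [pow_succ, h2]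
  rw [h3', h2]
  ring

lemma normSq_zomega_nonneg' (a b c d : ℤ) :
    0 ≤ ((a^2 + b^2 + c^2 + d^2 : ℤ) : ℝ)
        - ((d*(c-a) + b*(c+a) : ℤ) : ℝ) * Real.sqrt 2 := by
  have h := normSq_zomega (-a) b (-c) d
  have hnn := Complex.normSq_nonneg ((((-a : ℤ)):ℂ) * ω ^ 3 + ((b:ℤ):ℂ) * ω ^ 2
    + (((-c : ℤ)):ℂ) * ω + ((d:ℤ):ℂ))
  rw [h] at hnn
  push_cast at hnn ⊢
  nlinarith [hnn]

lemma key {m : Type*} [Fintype m] [DecidableEq m] (k : ℕ)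
    (U : Matrix m m ℂ) (hU : U ∈ Matrix.unitaryGroup m ℂ)
    (hZ : ∀ i j, inZω ((Real.sqrt 2 : ℂ) ^ k * U i j)) (i j : m) :
    ∃ q : ℤ × ℤ × ℤ × ℤ,
      (Real.sqrt 2 : ℂ) ^ k * U i j =
        (q.1 : ℂ) * ω ^ 3 + (q.2.1 : ℂ) * ω ^ 2 + (q.2.2.1 : ℂ) * ω + (q.2.2.2 : ℂ) ∧
      q.1^2 + q.2.1^2 + q.2.2.1^2 + q.2.2.2^2 ≤ 2^k := by
  classical
  have hch : ∀ j', ∃ q : ℤ × ℤ × ℤ × ℤ,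
      (Real.sqrt 2 : ℂ) ^ k * U i j' =
        (q.1 : ℂ) * ω ^ 3 + (q.2.1 : ℂ) * ω ^ 2 + (q.2.2.1 : ℂ) * ω + (q.2.2.2 : ℂ) := by
    intro j'
    obtain ⟨a, b, c, d, h⟩ := hZ i j'
    exact ⟨(a,b,c,d), h⟩
  choose t ht using hch
  set A : m → ℤ := fun j' => (t j').1^2 + (t j').2.1^2 + (t j').2.2.1^2 + (t j').2.2.2^2 with hA
  set B : m → ℤ := fun j' => (t j').2.2.2*((t j').2.2.1-(t j').1)
      + (t j').2.1*((t j').2.2.1+(t j').1) with hB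
  have hnsq : ∀ j', Complex.normSq ((Real.sqrt 2 : ℂ) ^ k * U i j')
      = (A j' : ℝ) + (B j' : ℝ) * Real.sqrt 2 := by
    intro j'
    rw [ht j']
    have := normSq_zomega (t j').1 (t j').2.1 (t j').2.2.1 (t j').2.2.2
    rw [this]
  have hflip : ∀ j', 0 ≤ (A j' : ℝ) - (B j' : ℝ) * Real.sqrt 2 := by
    intro j'
    have := normSq_zomega_nonneg' (t j').1 (t j').2.1 (t j').2.2.1 (t j').2.2.2
    simp only [hA, hB]
    push_cast at this ⊢
    linarith
  have hrow : ∑ j', Complex.normSq (U i j') = 1 := by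
    have h1 : U * star U = 1 := (Matrix.mem_unitaryGroup_iff).mp hU
    have h2 : (U * star U) i i = 1 := by rw [h1]; simp
    rw [Matrix.mul_apply] at h2
    have h3 : ∑ j', ((Complex.normSq (U i j') : ℝ) : ℂ) = 1 := by
      rw [← h2]
      refine Finset.sum_congr rfl fun j' _ => ?_
      rw [Matrix.star_apply, Complex.star_def]
      exact (Complex.mul_conj _).symm
    exact_mod_cast h3
  have hnorm2k : ∀ j', Complex.normSq ((Real.sqrt 2 : ℂ) ^ k * U i j')
      = 2^k * Complex.normSq (U i j') := by
    intro j'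
    rw [map_mul, map_pow, Complex.normSq_ofReal, Real.mul_self_sqrt (by norm_num : (0:ℝ) ≤ 2)]
  have hsum : ((∑ j', A j' : ℤ) : ℝ) + ((∑ j', B j' : ℤ) : ℝ) * Real.sqrt 2 = 2^k := by
    push_cast
    rw [Finset.sum_mul, ← Finset.sum_add_distrib]
    have e1 : ∑ j', ((A j' : ℝ) + (B j' : ℝ) * Real.sqrt 2)
        = ∑ j', Complex.normSq ((Real.sqrt 2 : ℂ) ^ k * U i j') :=
      Finset.sum_congr rfl fun j' _ => (hnsq j').symm
    rw [e1, Finset.sum_congr rfl fun j' _ => hnorm2k j', ← Finset.mul_sum, hrow, mul_one]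
  have hB0 : (∑ j', B j') = 0 := by
    by_contra hne
    have hb : ((∑ j', B j' : ℤ) : ℝ) ≠ 0 := Int.cast_ne_zero.mpr hne
    have heq : Real.sqrt 2 = ((2^k - ∑ j', A j' : ℤ) : ℝ) / ((∑ j', B j' : ℤ) : ℝ) := by
      rw [eq_div_iff hb]
      push_cast at hsum ⊢
      linarith
    have hirr : Irrational (Real.sqrt 2) := irrational_sqrt_two
    rw [heq] at hirr
    exact hirr ⟨((2^k - ∑ j', A j' : ℤ) : ℚ) / ((∑ j', B j' : ℤ) : ℚ), by push_cast; ring⟩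
  have hAsum : ((∑ j', A j' : ℤ) : ℝ) = 2^k := by
    have hb : ((∑ j', B j' : ℤ) : ℝ) = 0 := by exact_mod_cast hB0
    rw [hb, zero_mul, add_zero] at hsum
    exact hsum
  have hAB_le : (A j : ℝ) + (B j : ℝ) * Real.sqrt 2 ≤ 2^k := by
    have h0 : ∀ j' ∈ (Finset.univ : Finset m), 0 ≤ (A j' : ℝ) + (B j' : ℝ) * Real.sqrt 2 := by
      intro j' _
      rw [← hnsq j']
      exact Complex.normSq_nonneg _
    have h1 := Finset.single_le_sum h0 (Finset.mem_univ j)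
    have h2 : ∑ j', ((A j' : ℝ) + (B j' : ℝ) * Real.sqrt 2) = 2^k := by
      rw [Finset.sum_add_distrib, ← Finset.sum_mul]
      push_cast at hsum
      linarith
    linarith
  have hAB_le' : (A j : ℝ) - (B j : ℝ) * Real.sqrt 2 ≤ 2^k := by
    have h1 := Finset.single_le_sum (fun j' (_ : j' ∈ (Finset.univ : Finset m)) => hflip j')
      (Finset.mem_univ j)
    have h2 : ∑ j', ((A j' : ℝ) - (B j' : ℝ) * Real.sqrt 2) = 2^k := by
      rw [Finset.sum_sub_distrib, ← Finset.sum_mul]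
      have hb : ((∑ j', B j' : ℤ) : ℝ) = 0 := by exact_mod_cast hB0
      push_cast at hAsum hb
      rw [hb] at *
      push_cast
      linarith [hAsum]
    linarith
  refine ⟨t j, ht j, ?_⟩
  have hfin : (A j : ℝ) ≤ 2^k := by linarith
  have : A j ≤ 2^k := by exact_mod_cast hfin
  simpa [hA] using this

lemma sqrt_eq_of (m n : ℕ) (h1 : m*m ≤ n) (h2 : n < (m+1)*(m+1)) : Nat.sqrt n = m := by
  have ha := Nat.le_sqrt.mpr h1
  have hb := Nat.sqrt_lt.mpr h2
  omega

def disc (N : ℕ) : Finset (ℤ × ℤ) :=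
  ((Finset.Icc (-(Nat.sqrt N : ℤ)) (Nat.sqrt N)) ×ˢ
   (Finset.Icc (-(Nat.sqrt N : ℤ)) (Nat.sqrt N))).filter
    (fun p => p.1^2 + p.2^2 ≤ (N:ℤ))

lemma abs_le_sqrt {x : ℤ} {N : ℕ} (h : x^2 ≤ (N:ℤ)) :
    -(Nat.sqrt N : ℤ) ≤ x ∧ x ≤ (Nat.sqrt N : ℤ) := by
  have h1 : (x.natAbs)^2 ≤ N := by
    have hh : ((x.natAbs : ℤ))^2 = x^2 := Int.natAbs_sq x
    exact_mod_cast hh ▸ h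
  have h2 : x.natAbs ≤ Nat.sqrt N := Nat.le_sqrt'.mpr h1
  omega

lemma sum_sq_Icc (s : ℕ) :
    3 * ∑ a ∈ Finset.Icc (-(s:ℤ)) (s:ℤ), a^2 = s*(s+1)*(2*s+1) := by
  induction s with
  | zero => simp
  | succ s ih =>
    have hset : Finset.Icc (-((s:ℤ)+1)) ((s:ℤ)+1)
        = insert (-((s:ℤ)+1)) (insert ((s:ℤ)+1) (Finset.Icc (-(s:ℤ)) (s:ℤ))) := by
      ext a
      simp only [Finset.mem_Icc, Finset.mem_insert]
      omega
    push_cast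
    rw [hset, Finset.sum_insert (by
        simp only [Finset.mem_insert, Finset.mem_Icc]
        omega),
      Finset.sum_insert (by
        simp only [Finset.mem_Icc]
        omega)]
    push_cast at ih
    ring_nf
    ring_nf at ih
    linarith

lemma arith_aux (s u : ℤ) (hs5 : 5 ≤ s) (hu0 : 0 ≤ u)
    (h10 : 3*(2*(s^2+u) - s)^2 ≤ (2*s+1)^2 * (3*(s^2+u) - s*(s+1))) : False := by
  have hp1 : (0:ℤ) < 2*s^2 - 7*s - 1 := by nlinarith
  have hp2 : (0:ℤ) ≤ 4*s^2 - 8*s - 1 := by nlinarith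
  have hp3 : (0:ℤ) < 2*s^2 - s := by nlinarith
  nlinarith [h10, mul_pos hp3 hp1, mul_nonneg hu0 hp2, sq_nonneg u]

lemma disc_card_le (N : ℕ) (hN : 32 ≤ N) : (disc N).card ≤ 4 * N := by
  classical
  set s : ℕ := Nat.sqrt N with hs
  set r : ℤ → ℕ := fun a => Nat.sqrt (N - (a^2).toNat) with hr
  have hcard : ((disc N).card : ℤ) ≤ ∑ a ∈ Finset.Icc (-(s:ℤ)) (s:ℤ), (2*(r a : ℤ)+1) := by
    have h1 : (disc N).card = ∑ a ∈ Finset.Icc (-(s:ℤ)) (s:ℤ),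
        ((disc N).filter (fun p => p.1 = a)).card := by
      apply Finset.card_eq_sum_card_fiberwise
      intro p hp
      simp only [disc, Finset.mem_coe, Finset.mem_filter, Finset.mem_product, Finset.mem_Icc] at hp
      simp only [Finset.mem_coe, Finset.mem_Icc]
      exact abs_le_sqrt (by nlinarith [sq_nonneg p.2, hp.2])
    rw [h1]
    push_cast
    apply Finset.sum_le_sum
    intro a ha
    have h2 : ((disc N).filter (fun p => p.1 = a)).card
        ≤ (Finset.Icc (-(r a : ℤ)) (r a : ℤ)).card := by
      apply Finset.card_le_card_of_injOn (fun p => p.2)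
      · intro p hp
        simp only [disc, Finset.mem_coe, Finset.mem_filter, Finset.mem_product, Finset.mem_Icc] at hp
        obtain ⟨⟨⟨hp1, hp2⟩, hle⟩, hpa⟩ := hp
        have haN : a^2 ≤ (N:ℤ) := by nlinarith [sq_nonneg p.2, hle, hpa]
        have hc2 : p.2^2 ≤ (N:ℤ) - a^2 := by
          have heq : p.1^2 = a^2 := by rw [hpa]
          nlinarith [hle]
        have hcast : ((N - (a^2).toNat : ℕ) : ℤ) = (N:ℤ) - a^2 := by
          have h0 : (0:ℤ) ≤ a^2 := sq_nonneg a
          omega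
        have hres := abs_le_sqrt (N := N - (a^2).toNat) (x := p.2) (by rw [hcast]; exact hc2)
        simp only [Finset.mem_coe, Finset.mem_Icc]
        exact hres
      · intro p hp q hq hpq
        simp only [Finset.mem_coe, Finset.mem_filter] at hp hq
        have h1 : p.1 = q.1 := by rw [hp.2, hq.2]
        exact Prod.ext h1 hpq
    have h3 : ((Finset.Icc (-(r a : ℤ)) (r a : ℤ)).card : ℤ) = 2*(r a : ℤ)+1 := by
      rw [Int.card_Icc]
      omega
    exact le_trans (by exact_mod_cast h2) (le_of_eq h3)
  have hc : ((Finset.Icc (-(s:ℤ)) (s:ℤ)).card : ℤ) = 2*(s:ℤ)+1 := by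
    rw [Int.card_Icc]; omega
  have hsq : ∀ a ∈ Finset.Icc (-(s:ℤ)) (s:ℤ), ((r a : ℤ))^2 ≤ (N:ℤ) - a^2 := by
    intro a ha
    simp only [Finset.mem_Icc] at ha
    have hsle : ((s:ℤ))^2 ≤ N := by exact_mod_cast Nat.sqrt_le' N
    have haN : a^2 ≤ (N:ℤ) := by nlinarith [ha.1, ha.2]
    have h4 : (r a)^2 ≤ N - (a^2).toNat := Nat.sqrt_le' _
    have hcast : ((N - (a^2).toNat : ℕ) : ℤ) = (N:ℤ) - a^2 := by
      have h0 : (0:ℤ) ≤ a^2 := sq_nonneg a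
      omega
    calc ((r a : ℤ))^2 = ((r a ^ 2 : ℕ) : ℤ) := by push_cast; ring
      _ ≤ ((N - (a^2).toNat : ℕ) : ℤ) := by exact_mod_cast h4
      _ = (N:ℤ) - a^2 := hcast
  have hCS : (∑ a ∈ Finset.Icc (-(s:ℤ)) (s:ℤ), (r a : ℤ))^2
      ≤ (2*(s:ℤ)+1) * ∑ a ∈ Finset.Icc (-(s:ℤ)) (s:ℤ), ((r a : ℤ))^2 := by
    have hcs := sq_sum_le_card_mul_sum_sq (s := Finset.Icc (-(s:ℤ)) (s:ℤ))
      (f := fun a => (r a : ℤ))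
    calc (∑ a ∈ Finset.Icc (-(s:ℤ)) (s:ℤ), (r a : ℤ))^2
        ≤ ((Finset.Icc (-(s:ℤ)) (s:ℤ)).card : ℤ)
            * ∑ a ∈ Finset.Icc (-(s:ℤ)) (s:ℤ), ((r a : ℤ))^2 := hcs
      _ = _ := by rw [hc]
  have hsum2 : ∑ a ∈ Finset.Icc (-(s:ℤ)) (s:ℤ), ((r a : ℤ))^2
      ≤ (2*(s:ℤ)+1) * N - ∑ a ∈ Finset.Icc (-(s:ℤ)) (s:ℤ), a^2 := by
    calc ∑ a ∈ Finset.Icc (-(s:ℤ)) (s:ℤ), ((r a : ℤ))^2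
        ≤ ∑ a ∈ Finset.Icc (-(s:ℤ)) (s:ℤ), ((N:ℤ) - a^2) := Finset.sum_le_sum hsq
      _ = (2*(s:ℤ)+1) * N - ∑ a ∈ Finset.Icc (-(s:ℤ)) (s:ℤ), a^2 := by
          rw [Finset.sum_sub_distrib, Finset.sum_const, nsmul_eq_mul, hc]
  set S1 : ℤ := ∑ a ∈ Finset.Icc (-(s:ℤ)) (s:ℤ), (r a : ℤ) with hS1
  have hS1nonneg : 0 ≤ S1 := Finset.sum_nonneg fun a _ => by positivity
  have hkey : 3 * S1^2 ≤ (2*(s:ℤ)+1)^2 * (3*N - s*(s+1)) := by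
    have h6 := sum_sq_Icc s
    nlinarith [hCS, hsum2]
  have hs5 : (5:ℤ) ≤ (s:ℤ) := by
    have h25 : (5:ℕ) ≤ Nat.sqrt N := Nat.le_sqrt'.mpr (by omega)
    exact_mod_cast h25
  have hsle : ((s:ℤ))^2 ≤ N := by exact_mod_cast Nat.sqrt_le' N
  have hslt : (N:ℤ) ≤ ((s:ℤ))^2 + 2*s := by
    have hlt := Nat.lt_succ_sqrt' N
    have : (N:ℤ) < ((s:ℤ)+1)^2 := by exact_mod_cast hlt
    nlinarith [this]
  have hfinal : S1 ≤ 2*(N:ℤ) - s - 1 := by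
    by_contra hcon
    push_neg at hcon
    have h7 : 2*(N:ℤ) - s ≤ S1 := by omega
    have h8 : 0 ≤ 2*(N:ℤ) - s := by nlinarith [hsle, hs5]
    have h9 : 3*(2*(N:ℤ) - s)^2 ≤ 3 * S1^2 := by nlinarith [h7, h8]
    have h10 : 3*(2*(N:ℤ) - s)^2 ≤ (2*(s:ℤ)+1)^2 * (3*N - s*(s+1)) := le_trans h9 hkey
    obtain ⟨u, hu0, hu2, hNu⟩ : ∃ u : ℤ, 0 ≤ u ∧ u ≤ 2*(s:ℤ) ∧ (N:ℤ) = (s:ℤ)^2 + u :=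
      ⟨(N:ℤ) - (s:ℤ)^2, by linarith, by linarith, by ring⟩
    rw [hNu] at h10
    exact arith_aux (s:ℤ) u hs5 hu0 h10
  have hfin : ((disc N).card : ℤ) ≤ 4*N := by
    have hsum_const : ∑ a ∈ Finset.Icc (-(s:ℤ)) (s:ℤ), (2*(r a : ℤ)+1)
        = 2*S1 + (2*(s:ℤ)+1) := by
      rw [Finset.sum_add_distrib, Finset.sum_const, ← Finset.mul_sum, nsmul_eq_mul, mul_one, hc]
    rw [hsum_const] at hcard
    linarith [hcard, hfinal, hs5]
  exact_mod_cast hfin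

def ball4 (N : ℕ) : Finset (ℤ × ℤ × ℤ × ℤ) :=
  ((Finset.Icc (-(Nat.sqrt N : ℤ)) (Nat.sqrt N)) ×ˢ
   (Finset.Icc (-(Nat.sqrt N : ℤ)) (Nat.sqrt N)) ×ˢ
   (Finset.Icc (-(Nat.sqrt N : ℤ)) (Nat.sqrt N)) ×ˢ
   (Finset.Icc (-(Nat.sqrt N : ℤ)) (Nat.sqrt N))).filter
    (fun q => q.1^2 + q.2.1^2 + q.2.2.1^2 + q.2.2.2^2 ≤ (N:ℤ))

lemma mem_ball4 {N : ℕ} {q : ℤ × ℤ × ℤ × ℤ}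
    (h : q.1^2 + q.2.1^2 + q.2.2.1^2 + q.2.2.2^2 ≤ (N:ℤ)) : q ∈ ball4 N := by
  have n1 := sq_nonneg q.1
  have n2 := sq_nonneg q.2.1
  have n3 := sq_nonneg q.2.2.1
  have n4 := sq_nonneg q.2.2.2
  have b1 := abs_le_sqrt (x := q.1) (N := N) (by linarith)
  have b2 := abs_le_sqrt (x := q.2.1) (N := N) (by linarith)
  have b3 := abs_le_sqrt (x := q.2.2.1) (N := N) (by linarith)
  have b4 := abs_le_sqrt (x := q.2.2.2) (N := N) (by linarith)
  simp only [ball4, Finset.mem_filter, Finset.mem_product, Finset.mem_Icc]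
  exact ⟨⟨b1, b2, b3, b4⟩, h⟩

lemma disc_card_le_pow (k : ℕ) (hk : 2 ≤ k) : (disc (2^k)).card ≤ 2^(k+2) := by
  rcases lt_or_ge k 5 with h5 | h5
  · interval_cases k
    · have h : Nat.sqrt 4 = 2 := sqrt_eq_of 2 4 (by norm_num) (by norm_num)
      show (disc 4).card ≤ 16
      simp only [disc, h]; decide
    · have h : Nat.sqrt 8 = 2 := sqrt_eq_of 2 8 (by norm_num) (by norm_num)
      show (disc 8).card ≤ 32
      simp only [disc, h]; decide
    · have h : Nat.sqrt 16 = 4 := sqrt_eq_of 4 16 (by norm_num) (by norm_num)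
      show (disc 16).card ≤ 64
      simp only [disc, h]; decide
  · have h32 : 32 ≤ 2^k := by
      calc (32:ℕ) = 2^5 := by norm_num
        _ ≤ 2^k := Nat.pow_le_pow_right (by norm_num) h5
    calc (disc (2^k)).card ≤ 4 * 2^k := disc_card_le _ h32
      _ = 2^(k+2) := by ring

lemma ball4_card_le (k : ℕ) : (ball4 (2^k)).card ≤ 2^(4+2*k) := by
  rcases lt_or_ge k 2 with h2 | h2
  · interval_cases k
    · have h : Nat.sqrt 1 = 1 := sqrt_eq_of 1 1 (by norm_num) (by norm_num)
      show (ball4 1).card ≤ 16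
      simp only [ball4, h]; decide
    · have h : Nat.sqrt 2 = 1 := sqrt_eq_of 1 2 (by norm_num) (by norm_num)
      show (ball4 2).card ≤ 64
      simp only [ball4, h]; decide
  · have hinj : (ball4 (2^k)).card ≤ ((disc (2^k)) ×ˢ (disc (2^k))).card := by
      apply Finset.card_le_card_of_injOn (fun q => ((q.1, q.2.1), (q.2.2.1, q.2.2.2)))
      · intro q hq
        simp only [ball4, Finset.mem_coe, Finset.mem_filter, Finset.mem_product, Finset.mem_Icc] at hq
        obtain ⟨⟨hb1, hb2, hb3, hb4⟩, hle⟩ := hq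
        have n1 := sq_nonneg q.1
        have n2 := sq_nonneg q.2.1
        have n3 := sq_nonneg q.2.2.1
        have n4 := sq_nonneg q.2.2.2
        simp only [disc, Finset.mem_coe, Finset.mem_product, Finset.mem_filter, Finset.mem_Icc]
        exact ⟨⟨⟨hb1, hb2⟩, by linarith⟩, ⟨⟨hb3, hb4⟩, by linarith⟩⟩
      · intro p _ q _ hpq
        simp only [Prod.mk.injEq] at hpq
        obtain ⟨⟨e1, e2⟩, e3, e4⟩ := hpq
        exact Prod.ext e1 (Prod.ext e2 (Prod.ext e3 e4))
    calc (ball4 (2^k)).card ≤ ((disc (2^k)) ×ˢ (disc (2^k))).card := hinj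
      _ = (disc (2^k)).card * (disc (2^k)).card := Finset.card_product _ _
      _ ≤ 2^(k+2) * 2^(k+2) := Nat.mul_le_mul (disc_card_le_pow k h2) (disc_card_le_pow k h2)
      _ = 2^(4+2*k) := by rw [← pow_add]; ring_nf


/-- For `n ≥ 1` and `k ∈ ℕ`, the set of unitary `2^n × 2^n` matrices with denominator
exponent `k` (i.e. such that `√2^k·U` has all entries in `ℤ[ω]`) is finite, of cardinality
at most `2^(4^n·(4+2k))`. -/
theorem stmt18 (n : ℕ) (hn : 1 ≤ n) (k : ℕ) :
    {U : Matrix (Fin n → Fin 2) (Fin n → Fin 2) ℂ |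
        U ∈ Matrix.unitaryGroup (Fin n → Fin 2) ℂ ∧
        ∀ i j, inZω ((Real.sqrt 2 : ℂ) ^ k * U i j)}.Finite ∧
    {U : Matrix (Fin n → Fin 2) (Fin n → Fin 2) ℂ |
        U ∈ Matrix.unitaryGroup (Fin n → Fin 2) ℂ ∧
        ∀ i j, inZω ((Real.sqrt 2 : ℂ) ^ k * U i j)}.ncard ≤ 2 ^ (4 ^ n * (4 + 2 * k)) := by
  classical
  set m := (Fin n → Fin 2)
  set S := {U : Matrix m m ℂ |
      U ∈ Matrix.unitaryGroup m ℂ ∧ ∀ i j, inZω ((Real.sqrt 2 : ℂ) ^ k * U i j)} with hS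
  have hex : ∀ (U : ↥S) (i j : m), ∃ q : ℤ × ℤ × ℤ × ℤ,
      q ∈ ball4 (2^k) ∧
      (Real.sqrt 2 : ℂ) ^ k * (U : Matrix m m ℂ) i j =
        (q.1 : ℂ) * ω ^ 3 + (q.2.1 : ℂ) * ω ^ 2 + (q.2.2.1 : ℂ) * ω + (q.2.2.2 : ℂ) := by
    rintro ⟨U, hU, hZ⟩ i j
    obtain ⟨q, hq1, hq2⟩ := key k U hU hZ i j
    refine ⟨q, mem_ball4 ?_, hq1⟩
    push_cast
    push_cast at hq2
    linarith
  choose F hFmem hFeq using hex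
  set G : ↥S → (m → m → {x // x ∈ ball4 (2^k)}) :=
    fun U i j => ⟨F U i j, hFmem U i j⟩ with hG
  have hGinj : Function.Injective G := by
    intro U V hUV
    have hFeq' : ∀ i j, F U i j = F V i j := by
      intro i j
      have := congrFun (congrFun hUV i) j
      simpa [hG] using this
    have hne : ((Real.sqrt 2 : ℝ) : ℂ) ^ k ≠ 0 := by
      apply pow_ne_zero
      exact_mod_cast ne_of_gt (Real.sqrt_pos.mpr (by norm_num : (0:ℝ) < 2))
    apply Subtype.ext
    ext i j
    have h1 := hFeq U i j
    have h2 := hFeq V i j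
    rw [hFeq' i j] at h1
    exact mul_left_cancel₀ hne (h1.trans h2.symm)
  have hfinite : S.Finite := Set.finite_coe_iff.mp (Finite.of_injective G hGinj)
  refine ⟨hfinite, ?_⟩
  have hcard : S.ncard ≤ (ball4 (2^k)).card ^ (2^n * 2^n) := by
    have h1 : S.ncard = Nat.card ↥S := (Nat.card_coe_set_eq S).symm
    have h2 : Nat.card ↥S ≤ Nat.card (m → m → {x // x ∈ ball4 (2^k)}) :=
      Nat.card_le_card_of_injective G hGinj
    have h3 : Nat.card (m → m → {x // x ∈ ball4 (2^k)})
        = (ball4 (2^k)).card ^ (2^n * 2^n) := by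
      rw [Nat.card_eq_fintype_card, Fintype.card_fun, Fintype.card_fun]
      have hm : Fintype.card m = 2^n := by
        simp [m]
      rw [Fintype.card_coe, hm, ← pow_mul]
    rw [h1, ← h3]
    exact h2
  calc S.ncard ≤ (ball4 (2^k)).card ^ (2^n * 2^n) := hcard
    _ ≤ (2^(4+2*k)) ^ (2^n * 2^n) := Nat.pow_le_pow_left (ball4_card_le k) _
    _ = 2 ^ (4 ^ n * (4 + 2 * k)) := by
        rw [← pow_mul]
        congr 1
        have h4 : 2^n * 2^n = 4^n := by rw [← mul_pow]; norm_num
        rw [h4, Nat.mul_comm]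
end
end
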